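/- Let p be a prime and e ≥ 1. Then x^{p^e+p^{e−1}−1} ∉ J; consequently, in the quotient ring A = R/J the class a of x satisfies p^e·a = 0 (since p^e·F_0(x,y) = p^e·x is a generator of J) while a^{p^e+p^{e−1}−1} ≠ 0. -/

import Mathlib

open MvPolynomial

/-- The ideal `(p) ⊆ ℤ` is prime when `p` is a prime number. -/
instance spanIntPrime (p : ℕ) [hp : Fact p.Prime] : (Ideal.span {(p : ℤ)}).IsPrime :=
  (Ideal.span_singleton_prime (by exact_mod_cast hp.out.ne_zero)).mpr
    (Nat.prime_iff_prime_int.mp hp.out)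

/-- `K = ℤ_(p)`, the localization of `ℤ` at the prime ideal `(p)`. -/
abbrev Kloc (p : ℕ) [Fact p.Prime] : Type :=
  Localization.AtPrime (Ideal.span {(p : ℤ)})

/-- `R = K[x,y]`, the polynomial ring in two variables (`x = X 0`, `y = X 1`) over `K`. -/
abbrev Rpoly (p : ℕ) [Fact p.Prime] : Type :=
  MvPolynomial (Fin 2) (Kloc p)

/-- The polynomials `F_n ∈ ℤ[s,t]` (with `s = X 0`, `t = X 1`), defined recursively by
`F_0(s,t) = s` and `F_n(s,t) = F_{n-1}(s,t)^p - p · F_{n-1}(t,0)`. -/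
noncomputable def F (p : ℕ) : ℕ → MvPolynomial (Fin 2) ℤ
  | 0 => X 0
  | n + 1 => F p n ^ p - (p : MvPolynomial (Fin 2) ℤ) * (aeval ![X 1, 0] (F p n))

/-- `F_n(x,y) ∈ R`: the image of `F_n` under the evaluation `s ↦ x`, `t ↦ y`. -/
noncomputable def Fxy (p : ℕ) [Fact p.Prime] (n : ℕ) : Rpoly p :=
  MvPolynomial.map (Int.castRingHom (Kloc p)) (F p n)

namespace Xpow

variable (p : ℕ) [hp : Fact p.Prime]

/-- evaluation of `F` at `(t, 0)` is `t^(p^n)` -/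
lemma F_eval00 (n : ℕ) : aeval ![(0 : MvPolynomial (Fin 2) ℤ), 0] (F p n) = 0 := by
  induction n with
  | zero => simp [F]
  | succ n ih =>
    have hcomp : (aeval ![(0 : MvPolynomial (Fin 2) ℤ), 0]).comp
        (aeval ![(X 1 : MvPolynomial (Fin 2) ℤ), 0]) =
        aeval ![(0 : MvPolynomial (Fin 2) ℤ), 0] := by
      rw [MvPolynomial.comp_aeval]
      congr 1
      funext i
      fin_cases i <;> simp
    have := congrArg (fun φ : MvPolynomial (Fin 2) ℤ →ₐ[ℤ] MvPolynomial (Fin 2) ℤ =>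
      φ (F p n)) hcomp
    simp only [AlgHom.comp_apply] at this
    rw [F]
    simp only [map_sub, map_mul, map_pow, this, ih]
    rw [zero_pow hp.out.ne_zero, mul_zero, sub_zero]

lemma F_t0 (n : ℕ) :
    aeval ![(X 1 : MvPolynomial (Fin 2) ℤ), 0] (F p n) = (X 1) ^ p ^ n := by
  induction n with
  | zero => simp [F]
  | succ n ih =>
    have hcomp : (aeval ![(X 1 : MvPolynomial (Fin 2) ℤ), 0]).comp
        (aeval ![(X 1 : MvPolynomial (Fin 2) ℤ), 0]) =
        aeval ![(0 : MvPolynomial (Fin 2) ℤ), 0] := by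
      rw [MvPolynomial.comp_aeval]
      congr 1
      funext i
      fin_cases i <;> simp
    have h2 := congrArg (fun φ : MvPolynomial (Fin 2) ℤ →ₐ[ℤ] MvPolynomial (Fin 2) ℤ =>
      φ (F p n)) hcomp
    simp only [AlgHom.comp_apply] at h2
    rw [F]
    simp only [map_sub, map_mul, map_pow, ih, h2, F_eval00]
    have h0 : (aeval (R := ℤ) ![X 1, (0:MvPolynomial (Fin 2) ℤ)]) (X 1) = 0 := by
      simp
    rw [h0, zero_pow (pow_ne_zero n hp.out.ne_zero), mul_zero, sub_zero, ← pow_mul, ← pow_succ]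

lemma F_succ (n : ℕ) :
    F p (n + 1) = F p n ^ p - (p : MvPolynomial (Fin 2) ℤ) * (X 1) ^ p ^ n := by
  rw [F, F_t0]

lemma Fxy_zero : Fxy p 0 = X 0 := by simp [Fxy, F]

lemma Fxy_succ (n : ℕ) :
    Fxy p (n + 1) = Fxy p n ^ p - (p : Rpoly p) * (X 1) ^ p ^ n := by
  unfold Fxy
  rw [F_succ]
  simp [map_sub, map_mul, map_pow]

lemma Fxy_one : Fxy p 1 = (X 0 : Rpoly p) ^ p - (p : Rpoly p) * X 1 := by
  rw [Fxy_succ, Fxy_zero]; simp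

end Xpow

namespace Xpow

variable (p : ℕ) [hp : Fact p.Prime]

/-- the shift endomorphism `x ↦ F₁(x,y)`, `y ↦ y^p` -/
noncomputable def σh : Rpoly p →ₐ[Kloc p] Rpoly p := aeval ![Fxy p 1, (X 1) ^ p]

/-- the ideal `J` at level `e` -/
noncomputable def JJ (e : ℕ) : Ideal (Rpoly p) :=
  Ideal.span
    ((Set.range fun n : Fin (e + 1) => (p : Rpoly p) ^ (e - (n : ℕ)) * Fxy p n) ∪
      {X 1 ^ p ^ e})

lemma sigma_X0 : σh p (X 0) = Fxy p 1 := by simp [σh]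

lemma sigma_X1 : σh p (X 1) = (X 1 : Rpoly p) ^ p := by simp [σh]

lemma sigma_Fxy (n : ℕ) : σh p (Fxy p n) = Fxy p (n + 1) := by
  induction n with
  | zero => rw [Fxy_zero, sigma_X0]
  | succ n ih =>
    rw [Fxy_succ, map_sub, map_mul, map_pow, ih, map_natCast, map_pow, sigma_X1,
      ← pow_mul, ← pow_succ', ← Fxy_succ]

lemma gen_mem (e n : ℕ) (hn : n ≤ e) :
    (p : Rpoly p) ^ (e - n) * Fxy p n ∈ JJ p e := by
  apply Ideal.subset_span
  left
  exact ⟨⟨n, by omega⟩, rfl⟩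

lemma ypow_mem (e : ℕ) : (X 1 : Rpoly p) ^ p ^ e ∈ JJ p e := by
  apply Ideal.subset_span
  right
  rfl

lemma sigma_JJ (E : ℕ) {g : Rpoly p} (hg : g ∈ JJ p E) : σh p g ∈ JJ p (E + 1) := by
  refine Submodule.span_induction ?_ ?_ ?_ ?_ hg
  · rintro x (⟨n, rfl⟩ | rfl)
    · rw [map_mul, map_pow, map_natCast, sigma_Fxy]
      have h : E - (n : ℕ) = (E + 1) - ((n : ℕ) + 1) := by omega
      rw [h]
      exact gen_mem p (E + 1) ((n : ℕ) + 1) (by omega)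
    · rw [map_pow, sigma_X1, ← pow_mul, ← pow_succ']
      exact ypow_mem p (E + 1)
  · simp
  · intro x y _ _ hx hy
    rw [map_add]; exact Ideal.add_mem _ hx hy
  · intro a x _ hx
    rw [smul_eq_mul, map_mul]
    exact Ideal.mul_mem_left _ _ hx

lemma Ylem (E : ℕ) (hE : 1 ≤ E) :
    (p : Rpoly p) ^ (E + 1) * X 1 ∈ JJ p E := by
  have e1 : (X 0 : Rpoly p) ^ p = X 0 ^ (p - 1) * X 0 := by
    rw [← pow_succ]
    congr 1
    have := hp.out.two_le
    omega
  have e2 : (p : Rpoly p) ^ E = (p : Rpoly p) * (p : Rpoly p) ^ (E - 1) := by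
    rw [← pow_succ']
    congr 1
    omega
  have key : (p : Rpoly p) ^ (E + 1) * X 1 =
      X 0 ^ (p - 1) * ((p : Rpoly p) ^ (E - 0) * Fxy p 0) -
        (p : Rpoly p) * ((p : Rpoly p) ^ (E - 1) * Fxy p 1) := by
    rw [Fxy_zero, Fxy_one, Nat.sub_zero, e1, pow_succ]
    linear_combination ((p : Rpoly p) * X 1 - X 0 * X 0 ^ (p - 1)) * e2
  rw [key]
  exact sub_mem (Ideal.mul_mem_left _ _ (gen_mem p E 0 (by omega)))
    (Ideal.mul_mem_left _ _ (gen_mem p E 1 hE))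

/-- `N_m = p^m + p^(m-1) - 1`, with `N_0 = 0`. -/
def Nn : ℕ → ℕ
  | 0 => 0
  | m + 1 => p ^ (m + 1) + p ^ m - 1

lemma Nn_succ (m : ℕ) : Nn p (m + 1) + 1 = p ^ (m + 1) + p ^ m := by
  have h1 : 1 ≤ p ^ (m + 1) := Nat.one_le_pow _ _ hp.out.pos
  simp only [Nn]
  omega

lemma Nn_step (m : ℕ) : Nn p m + 1 ≤ Nn p (m + 1) := by
  have h2 := hp.out.two_le
  cases m with
  | zero =>
    simp only [Nn]
    have : 2 ^ 1 + 2 ^ 0 ≤ p ^ 1 + p ^ 0 := by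
      gcongr <;> omega
    simp at this ⊢
    omega
  | succ m =>
    simp only [Nn, show m + 1 + 1 = m + 2 from rfl]
    have h6 : 1 ≤ p ^ m := Nat.one_le_pow _ _ hp.out.pos
    have hh : p ^ m + 1 ≤ p ^ (m + 2) := by
      have h3 : p ^ (m + 2) = p ^ m * p ^ 2 := by ring
      have h4 : 4 ≤ p ^ 2 := by nlinarith
      nlinarith
    have h1 : 1 ≤ p ^ (m + 1) := Nat.one_le_pow _ _ hp.out.pos
    omega

lemma Nn_grow (a b : ℕ) : Nn p a + b ≤ Nn p (a + b) := by
  induction b with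
  | zero => simp
  | succ b ih =>
    rw [show a + (b + 1) = (a + b) + 1 from by omega]
    have := Nn_step p (a + b)
    omega

lemma Nn_ge_self (m : ℕ) : m ≤ Nn p m := by
  have := Nn_grow p 0 m
  simpa [Nn] using this

lemma Nn_mul (m : ℕ) (hm : 2 ≤ m) : Nn p m + 1 = p * (Nn p (m - 1) + 1) := by
  obtain ⟨a, rfl⟩ : ∃ a, m = a + 2 := ⟨m - 2, by omega⟩
  rw [Nn_succ]
  have h : a + 2 - 1 = a + 1 := by omega
  rw [h, Nn_succ]
  ring

end Xpow
namespace Xpow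

variable (p : ℕ) [hp : Fact p.Prime]

lemma Nn_one : Nn p 1 = p := by
  simp only [Nn, zero_add, pow_one, pow_zero]
  omega

lemma Nn_ge_succ (l : ℕ) (hl : 1 ≤ l) : l + 1 ≤ Nn p l := by
  have h := Nn_grow p 1 (l - 1)
  rw [show 1 + (l - 1) = l by omega, Nn_one] at h
  have := hp.out.two_le
  omega

lemma sigma_pow_mem (E : ℕ) {a b : ℕ} (h : (p : Rpoly p) ^ a * X 0 ^ b ∈ JJ p E) :
    (p : Rpoly p) ^ a * Fxy p 1 ^ b ∈ JJ p (E + 1) := by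
  have h2 := sigma_JJ p E h
  rwa [map_mul, map_pow, map_pow, map_natCast, sigma_X0] at h2

/-- absorb a term that is a pure `p`-power times `y`-powers -/
lemma term_pure (E κ M : ℕ) (CC : Rpoly p) (hM : 1 ≤ M) (h : E + 2 ≤ κ + M) :
    (p : Rpoly p) ^ κ * (((p : Rpoly p) * X 1) ^ M * CC) ∈ JJ p (E + 1) := by
  obtain ⟨M', rfl⟩ : ∃ M', M = M' + 1 := ⟨M - 1, by omega⟩
  obtain ⟨r, hr⟩ : ∃ r, κ + (M' + 1) = (E + 2) + r := ⟨κ + (M' + 1) - (E + 2), by omega⟩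
  have hcomb : (p : Rpoly p) ^ κ * (p : Rpoly p) ^ (M' + 1) =
      (p : Rpoly p) ^ (E + 2) * (p : Rpoly p) ^ r := by
    rw [← pow_add, hr, pow_add]
  have key : (p : Rpoly p) ^ κ * (((p : Rpoly p) * X 1) ^ (M' + 1) * CC) =
      ((p : Rpoly p) ^ r * X 1 ^ M' * CC) * ((p : Rpoly p) ^ (E + 1 + 1) * X 1) := by
    calc (p : Rpoly p) ^ κ * (((p : Rpoly p) * X 1) ^ (M' + 1) * CC)
        = ((p : Rpoly p) ^ κ * (p : Rpoly p) ^ (M' + 1)) * (X 1 ^ (M' + 1) * CC) := by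
          rw [mul_pow]; ring
      _ = ((p : Rpoly p) ^ (E + 2) * (p : Rpoly p) ^ r) * (X 1 ^ (M' + 1) * CC) := by
          rw [hcomb]
      _ = ((p : Rpoly p) ^ r * X 1 ^ M' * CC) * ((p : Rpoly p) ^ (E + 1 + 1) * X 1) := by
          rw [pow_succ (X 1 : Rpoly p) M']; ring_nf
  rw [key]
  exact Ideal.mul_mem_left _ _ (Ylem p (E + 1) (by omega))

/-- absorb a term via a known membership for `p^(κ+i) * F₁^c` -/
lemma term_mid (E κ i c k : ℕ) (CC : Rpoly p) (hkc : c ≤ k)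
    (h2 : (p : Rpoly p) ^ (κ + i) * Fxy p 1 ^ c ∈ JJ p (E + 1)) :
    (p : Rpoly p) ^ κ * (Fxy p 1 ^ k * ((p : Rpoly p) * X 1) ^ i * CC) ∈ JJ p (E + 1) := by
  obtain ⟨d, rfl⟩ : ∃ d, k = c + d := ⟨k - c, by omega⟩
  have key : (p : Rpoly p) ^ κ * (Fxy p 1 ^ (c + d) * ((p : Rpoly p) * X 1) ^ i * CC) =
      (Fxy p 1 ^ d * X 1 ^ i * CC) * ((p : Rpoly p) ^ (κ + i) * Fxy p 1 ^ c) := by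
    rw [mul_pow, pow_add ((p : Rpoly p)) κ i, pow_add (Fxy p 1) c d]
    ring
  rw [key]
  exact Ideal.mul_mem_left _ _ h2

/-- absorb a term with a high `p`-power and an `F₁` factor -/
lemma term_high (E κ i k : ℕ) (CC : Rpoly p) (hk : 1 ≤ k) (hge : E ≤ κ + i) :
    (p : Rpoly p) ^ κ * (Fxy p 1 ^ k * ((p : Rpoly p) * X 1) ^ i * CC) ∈ JJ p (E + 1) := by
  obtain ⟨k', rfl⟩ : ∃ k', k = k' + 1 := ⟨k - 1, by omega⟩
  obtain ⟨r, hr⟩ : ∃ r, κ + i = E + r := ⟨κ + i - E, by omega⟩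
  have hcomb : (p : Rpoly p) ^ κ * (p : Rpoly p) ^ i =
      (p : Rpoly p) ^ E * (p : Rpoly p) ^ r := by
    rw [← pow_add, hr, pow_add]
  have key : (p : Rpoly p) ^ κ * (Fxy p 1 ^ (k' + 1) * ((p : Rpoly p) * X 1) ^ i * CC) =
      ((p : Rpoly p) ^ r * Fxy p 1 ^ k' * X 1 ^ i * CC) *
        ((p : Rpoly p) ^ (E + 1 - 1) * Fxy p 1) := by
    rw [show E + 1 - 1 = E from by omega, mul_pow, pow_succ (Fxy p 1) k']
    calc (p : Rpoly p) ^ κ * (Fxy p 1 ^ k' * Fxy p 1 * ((p : Rpoly p) ^ i * X 1 ^ i) * CC)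
        = ((p : Rpoly p) ^ κ * (p : Rpoly p) ^ i) * (Fxy p 1 ^ k' * Fxy p 1 * X 1 ^ i * CC) := by
          ring
      _ = ((p : Rpoly p) ^ E * (p : Rpoly p) ^ r) * (Fxy p 1 ^ k' * Fxy p 1 * X 1 ^ i * CC) := by
          rw [hcomb]
      _ = ((p : Rpoly p) ^ r * Fxy p 1 ^ k' * X 1 ^ i * CC) * ((p : Rpoly p) ^ E * Fxy p 1) := by
          ring
  rw [key]
  exact Ideal.mul_mem_left _ _ (gen_mem p (E + 1) 1 (by omega))

theorem Mlem (E : ℕ) (hE : 1 ≤ E) : ∀ κ, κ ≤ E →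
    (p : Rpoly p) ^ κ * X 0 ^ (Nn p (E - κ) + 1) ∈ JJ p E := by
  induction E with
  | zero => omega
  | succ E ih =>
    intro κ hκ
    by_cases hκE : κ = E + 1
    · subst hκE
      rw [Nat.sub_self, show Nn p 0 = 0 from rfl]
      have h := gen_mem p (E + 1) 0 (by omega)
      rw [Fxy_zero, Nat.sub_zero] at h
      simpa using h
    · by_cases hκE1 : κ = E
      · subst hκE1
        rw [show κ + 1 - κ = 1 by omega, show Nn p 1 + 1 = p + 1 from by rw [Nn_one]]
        have key : (p : Rpoly p) ^ κ * X 0 ^ (p + 1) =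
            X 0 * ((p : Rpoly p) ^ (κ + 1 - 1) * Fxy p 1) +
              X 1 * ((p : Rpoly p) ^ (κ + 1 - 0) * Fxy p 0) := by
          rw [Fxy_zero, Fxy_one, show κ + 1 - 1 = κ by omega, Nat.sub_zero, pow_succ,
            pow_succ]
          ring
        rw [key]
        exact Ideal.add_mem _ (Ideal.mul_mem_left _ _ (gen_mem p (κ + 1) 1 (by omega)))
          (Ideal.mul_mem_left _ _ (gen_mem p (κ + 1) 0 (by omega)))
      · have hκE2 : κ + 1 ≤ E := by omega
        have hE1 : 1 ≤ E := by omega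
        have hm2 : 2 ≤ E + 1 - κ := by omega
        obtain ⟨M, hM⟩ : ∃ M, Nn p (E - κ) + 1 = M := ⟨_, rfl⟩
        have hsplit : Nn p (E + 1 - κ) + 1 = p * M := by
          have h := Nn_mul p (E + 1 - κ) hm2
          rwa [show E + 1 - κ - 1 = E - κ by omega, hM] at h
        have hxp : (X 0 : Rpoly p) ^ p = Fxy p 1 + (p : Rpoly p) * X 1 := by
          rw [Fxy_one]; ring
        rw [hsplit, pow_mul, hxp, add_pow, Finset.mul_sum]
        apply Ideal.sum_mem
        intro k hk
        rw [Finset.mem_range] at hk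
        by_cases hkM : k = M
        · subst hkM
          have child := ih hE1 κ (by omega)
          rw [hM] at child
          have h2 := sigma_pow_mem p E child
          simpa [Nat.choose_self] using h2
        · by_cases hk0 : k = 0
          · subst hk0
            have hineq : E + 2 ≤ κ + M := by
              have h1 := Nn_ge_succ p (E - κ) (by omega)
              omega
            have h0 : (Fxy p 1) ^ (0 : ℕ) = 1 := pow_zero _
            rw [h0, one_mul, Nat.sub_zero]
            exact term_pure p E κ M _ (by omega) hineq
          · by_cases hci : κ + (M - k) ≤ E
            · obtain ⟨c, hc⟩ : ∃ c, Nn p (E - (κ + (M - k))) + 1 = c := ⟨_, rfl⟩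
              have child := ih hE1 (κ + (M - k)) hci
              rw [hc] at child
              have h2 := sigma_pow_mem p E child
              have hkc : c ≤ k := by
                have hgrow := Nn_grow p (E - (κ + (M - k))) (M - k)
                rw [show E - (κ + (M - k)) + (M - k) = E - κ by omega] at hgrow
                omega
              exact term_mid p E κ (M - k) c k _ hkc h2
            · exact term_high p E κ (M - k) k _ (by omega) (by omega)

end Xpow
namespace Xpow

variable (p : ℕ) [hp : Fact p.Prime]

noncomputable section Tower

/-- first tower step: adjoin `y₁` with `y₁^p = t` -/
def f1 : Polynomial (Rpoly p) := Polynomial.X ^ p - Polynomial.C (MvPolynomial.X 1)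

lemma f1_monic : (f1 p).Monic := Polynomial.monic_X_pow_sub_C _ hp.out.ne_zero

abbrev C1 := AdjoinRoot (f1 p)

def y1 : C1 p := AdjoinRoot.root (f1 p)

lemma y1_pow : (y1 p) ^ p = algebraMap (Rpoly p) (C1 p) (MvPolynomial.X 1) := by
  have h : AdjoinRoot.mk (f1 p) (Polynomial.X ^ p - Polynomial.C (MvPolynomial.X 1)) = 0 :=
    AdjoinRoot.mk_self
  rw [AdjoinRoot.algebraMap_eq]
  rw [map_sub, map_pow, AdjoinRoot.mk_X, AdjoinRoot.mk_C] at h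
  exact sub_eq_zero.mp h

instance : Nontrivial (C1 p) := by
  refine AdjoinRoot.nontrivial _ ?_
  rw [f1, Polynomial.degree_X_pow_sub_C hp.out.pos]
  exact_mod_cast hp.out.ne_zero

/-- second tower step: adjoin `x₂` with `x₂^p = s + p y₁` -/
def f2 : Polynomial (C1 p) :=
  Polynomial.X ^ p -
    Polynomial.C (algebraMap (Rpoly p) (C1 p) (MvPolynomial.X 0) + (p : C1 p) * y1 p)

lemma f2_monic : (f2 p).Monic := Polynomial.monic_X_pow_sub_C _ hp.out.ne_zero

abbrev C2 := AdjoinRoot (f2 p)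

def x2 : C2 p := AdjoinRoot.root (f2 p)

def y2 : C2 p := algebraMap (C1 p) (C2 p) (y1 p)

lemma x2_pow : (x2 p) ^ p = algebraMap (C1 p) (C2 p)
    (algebraMap (Rpoly p) (C1 p) (MvPolynomial.X 0) + (p : C1 p) * y1 p) := by
  have h : AdjoinRoot.mk (f2 p) (Polynomial.X ^ p -
      Polynomial.C (algebraMap (Rpoly p) (C1 p) (MvPolynomial.X 0) + (p : C1 p) * y1 p)) = 0 :=
    AdjoinRoot.mk_self
  rw [AdjoinRoot.algebraMap_eq]
  rw [map_sub, map_pow, AdjoinRoot.mk_X, AdjoinRoot.mk_C] at h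
  exact sub_eq_zero.mp h

def pb1 : PowerBasis (Rpoly p) (C1 p) := AdjoinRoot.powerBasis' (f1_monic p)

def pb2 : PowerBasis (C1 p) (C2 p) := AdjoinRoot.powerBasis' (f2_monic p)

lemma pb1_dim : (pb1 p).dim = p := by
  rw [pb1, AdjoinRoot.powerBasis'_dim, f1, Polynomial.natDegree_X_pow_sub_C]

lemma pb2_dim : (pb2 p).dim = p := by
  rw [pb2, AdjoinRoot.powerBasis'_dim, f2, Polynomial.natDegree_X_pow_sub_C]

def i1 : Fin (pb1 p).dim := ⟨0, by rw [pb1_dim]; exact hp.out.pos⟩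

def i2 : Fin (pb2 p).dim := ⟨p - 1, by rw [pb2_dim]; have := hp.out.two_le; omega⟩

/-- the coordinate of `c • x₂^(p-1)` at the basis monomial `x₂^(p-1) y₁^0` -/
def coordC : C2 p →ₗ[Rpoly p] Rpoly p :=
  ((pb1 p).basis.coord (i1 p)) ∘ₗ
    (((pb2 p).basis.coord (i2 p)).restrictScalars (Rpoly p))

/-- evaluation into the tower -/
def Ψt : Rpoly p →ₐ[Kloc p] C2 p := MvPolynomial.aeval ![x2 p, y2 p]

/-- the key linear functional -/
def Λf : Rpoly p →ₗ[Kloc p] Rpoly p :=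
  ((coordC p).restrictScalars (Kloc p)) ∘ₗ (Ψt p).toLinearMap

lemma coord2_mul_gen (c : C1 p) :
    (pb2 p).basis.coord (i2 p) (algebraMap (C1 p) (C2 p) c * (x2 p) ^ (p - 1)) = c := by
  have hb : (pb2 p).basis (i2 p) = (x2 p) ^ (p - 1) := by
    rw [PowerBasis.basis_eq_pow]; rfl
  have hsm : algebraMap (C1 p) (C2 p) c * (x2 p) ^ (p - 1) = c • ((pb2 p).basis (i2 p)) := by
    rw [hb, Algebra.smul_def]
  rw [hsm, map_smul, Module.Basis.coord_apply, Module.Basis.repr_self, smul_eq_mul,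
    Finsupp.single_eq_same, mul_one]

lemma coord1_scaled (u : Rpoly p) (r : ℕ) (hr : r < p) :
    (pb1 p).basis.coord (i1 p) (algebraMap (Rpoly p) (C1 p) u * (y1 p) ^ r) =
      if r = 0 then u else 0 := by
  have hb : (pb1 p).basis ⟨r, by rw [pb1_dim]; exact hr⟩ = (y1 p) ^ r := by
    rw [PowerBasis.basis_eq_pow]; rfl
  have hsm : algebraMap (Rpoly p) (C1 p) u * (y1 p) ^ r =
      u • ((pb1 p).basis ⟨r, by rw [pb1_dim]; exact hr⟩) := by
    rw [hb, Algebra.smul_def]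
  rw [hsm, map_smul, Module.Basis.coord_apply, Module.Basis.repr_self, smul_eq_mul,
    Finsupp.single_apply]
  have : (⟨r, by rw [pb1_dim]; exact hr⟩ : Fin (pb1 p).dim) = i1 p ↔ r = 0 := by
    rw [Fin.ext_iff]
    simp [i1]
  by_cases h : r = 0
  · rw [if_pos (this.mpr h), if_pos h, mul_one]
  · rw [if_neg (fun hc => h (this.mp hc)), if_neg h, mul_zero]

end Tower

end Xpow
namespace Xpow

variable (p : ℕ) [hp : Fact p.Prime]

noncomputable section Lam

lemma Psi_X0 : Ψt p (X 0) = x2 p := by simp [Ψt]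

lemma Psi_X1 : Ψt p (X 1) = y2 p := by simp [Ψt]

lemma Psi_sigma_apply (g : Rpoly p) :
    Ψt p (σh p g) = algebraMap (Rpoly p) (C2 p) g := by
  have hcomp : (Ψt p).comp (σh p) = IsScalarTower.toAlgHom (Kloc p) (Rpoly p) (C2 p) := by
    apply MvPolynomial.algHom_ext
    intro i
    fin_cases i
    · show Ψt p (σh p (X 0)) = _
      rw [sigma_X0, Fxy_one, map_sub, map_pow, map_mul, Psi_X0, Psi_X1, map_natCast,
        x2_pow, map_add, map_mul, map_natCast]
      show _ = algebraMap (Rpoly p) (C2 p) (X 0)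
      rw [IsScalarTower.algebraMap_apply (Rpoly p) (C1 p) (C2 p)]
      show _ = algebraMap (C1 p) (C2 p) (algebraMap (Rpoly p) (C1 p) (X 0))
      unfold y2
      ring
    · show Ψt p (σh p (X 1)) = _
      rw [sigma_X1, map_pow, Psi_X1]
      show _ = algebraMap (Rpoly p) (C2 p) (X 1)
      unfold y2
      rw [← map_pow, y1_pow, IsScalarTower.algebraMap_apply (Rpoly p) (C1 p) (C2 p)]
  exact DFunLike.congr_fun hcomp g

lemma Lambda_apply (z : Rpoly p) : Λf p z = coordC p (Ψt p z) := rfl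

lemma Lambda_sigma_mul (g h : Rpoly p) : Λf p (σh p g * h) = g * Λf p h := by
  rw [Lambda_apply, map_mul, Psi_sigma_apply, ← Algebra.smul_def, map_smul,
    Lambda_apply, smul_eq_mul]

lemma Lambda_pmul (a : ℕ) (h : Rpoly p) :
    Λf p ((p : Rpoly p) ^ a * h) = (p : Rpoly p) ^ a * Λf p h := by
  have hs : ∀ z : Rpoly p, (p : Rpoly p) ^ a * z = ((p : Kloc p) ^ a) • z := by
    intro z
    rw [Algebra.smul_def, map_pow, map_natCast]
  rw [hs, map_smul, ← hs]

lemma coordC_term (u : Rpoly p) (j : ℕ) :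
    coordC p (algebraMap (C1 p) (C2 p)
        (algebraMap (Rpoly p) (C1 p) u * (y1 p) ^ j) * (x2 p) ^ (p - 1)) =
      if j % p = 0 then u * X 1 ^ (j / p) else 0 := by
  have hy : (y1 p) ^ j = algebraMap (Rpoly p) (C1 p) (X 1 ^ (j / p)) * (y1 p) ^ (j % p) := by
    conv_lhs => rw [show j = p * (j / p) + j % p from (Nat.div_add_mod j p).symm]
    rw [pow_add, pow_mul, y1_pow, ← map_pow]
  have hinner : algebraMap (Rpoly p) (C1 p) u * (y1 p) ^ j =
      algebraMap (Rpoly p) (C1 p) (u * X 1 ^ (j / p)) * (y1 p) ^ (j % p) := by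
    rw [hy, map_mul, ← mul_assoc]
  rw [hinner]
  show ((pb1 p).basis.coord (i1 p))
    (((pb2 p).basis.coord (i2 p)) (algebraMap (C1 p) (C2 p) _ * (x2 p) ^ (p - 1))) = _
  rw [coord2_mul_gen, coord1_scaled p _ _ (Nat.mod_lt j hp.out.pos)]

lemma Lambda_xpow (N' : ℕ) :
    Λf p (X 0 ^ (p * N' + (p - 1))) =
      ∑ k ∈ Finset.range (N' + 1),
        (if (N' - k) % p = 0 then
          ((N'.choose k : Rpoly p) * (p : Rpoly p) ^ (N' - k) * X 0 ^ k * X 1 ^ ((N' - k) / p))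
         else 0) := by
  have hΨ : Ψt p (X 0 ^ (p * N' + (p - 1))) =
      ∑ k ∈ Finset.range (N' + 1),
        algebraMap (C1 p) (C2 p)
          (algebraMap (Rpoly p) (C1 p)
            ((N'.choose k : Rpoly p) * (p : Rpoly p) ^ (N' - k) * X 0 ^ k) *
              (y1 p) ^ (N' - k)) * (x2 p) ^ (p - 1) := by
    rw [map_pow, Psi_X0, pow_add, pow_mul, x2_pow, ← map_pow, add_pow, map_sum,
      Finset.sum_mul]
    refine Finset.sum_congr rfl ?_
    intro k _
    congr 1
    simp only [map_mul, map_pow, map_natCast, mul_pow]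
    ring
  rw [Lambda_apply, hΨ, map_sum]
  refine Finset.sum_congr rfl ?_
  intro k _
  rw [coordC_term]

end Lam

end Xpow
namespace Xpow

variable (p : ℕ) [hp : Fact p.Prime]

noncomputable section Base

lemma nu_unit (y : ↥(Ideal.span {(p : ℤ)}).primeCompl) :
    IsUnit ((Int.castRingHom (ZMod (p ^ 2))) (y : ℤ)) := by
  obtain ⟨y, hy⟩ := y
  have hnd : ¬ ((p : ℤ) ∣ y) := fun hdvd => hy (Ideal.mem_span_singleton.mpr hdvd)
  have hnd' : ¬ (p ∣ y.natAbs) := by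
    intro hc
    apply hnd
    exact (Int.ofNat_dvd.mpr hc).trans (Int.natAbs_dvd.mpr dvd_rfl)
  have hcop : (Int.natAbs y).Coprime (p ^ 2) :=
    Nat.Coprime.pow_right 2 (Nat.coprime_comm.mp (hp.out.coprime_iff_not_dvd.mpr hnd'))
  have hu : IsUnit ((y.natAbs : ℕ) : ZMod (p ^ 2)) :=
    (ZMod.isUnit_iff_coprime _ _).mpr hcop
  show IsUnit ((y : ℤ) : ZMod (p ^ 2))
  rcases Int.natAbs_eq y with he | he
  · rw [he, Int.cast_natCast]; exact hu
  · rw [he, Int.cast_neg, Int.cast_natCast]; exact (IsUnit.neg_iff _).mpr hu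

/-- reduction `ℤ_(p) → ℤ/p²` -/
def νh : Kloc p →+* ZMod (p ^ 2) :=
  IsLocalization.lift (M := (Ideal.span {(p : ℤ)}).primeCompl) (nu_unit p)

/-- reduction of polynomials mod `p²` -/
def Φ₂ : Rpoly p →+* MvPolynomial (Fin 2) (ZMod (p ^ 2)) := MvPolynomial.map (νh p)

/-- the monomial `x^p` -/
def m1 : Fin 2 →₀ ℕ := Finsupp.single 0 p

/-- the monomial `y` -/
def m2 : Fin 2 →₀ ℕ := Finsupp.single 1 1

lemma not_mem_m2_supp : (0 : Fin 2) ∉ (m2).support := by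
  simp [m2, Finsupp.mem_support_iff, Finsupp.single_apply]

lemma mem_m2_supp : (1 : Fin 2) ∈ (m2).support := by
  simp [m2, Finsupp.mem_support_iff, Finsupp.single_apply]

/-- base-case detecting functional: `f ↦ p·(coeff of x^p) + (coeff of y)` -/
def μl : MvPolynomial (Fin 2) (ZMod (p ^ 2)) →ₗ[ZMod (p ^ 2)] ZMod (p ^ 2) :=
  (p : ZMod (p ^ 2)) • (lcoeff (ZMod (p ^ 2)) (m1 p)) + lcoeff (ZMod (p ^ 2)) m2

lemma mu_apply (q : MvPolynomial (Fin 2) (ZMod (p ^ 2))) :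
    μl p q = (p : ZMod (p ^ 2)) * coeff (m1 p) q + coeff m2 q := rfl

lemma pp_zero : (p : ZMod (p ^ 2)) * (p : ZMod (p ^ 2)) = 0 := by
  rw [← Nat.cast_mul, ← pow_two, ZMod.natCast_self]

lemma not_le_m1_m2 : ¬ (m1 p ≤ m2) := by
  intro h
  have h0 := h 0
  simp [m1, m2, Finsupp.single_apply] at h0
  have := hp.out.pos
  omega

lemma mu_mul_px (c : MvPolynomial (Fin 2) (ZMod (p ^ 2))) :
    μl p (c * ((p : MvPolynomial (Fin 2) (ZMod (p ^ 2))) * X 0)) = 0 := by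
  have hre : c * ((p : MvPolynomial (Fin 2) (ZMod (p ^ 2))) * X 0) =
      C (p : ZMod (p ^ 2)) * (c * X 0) := by
    rw [← map_natCast (C : ZMod (p ^ 2) →+* MvPolynomial (Fin 2) (ZMod (p ^ 2)))]
    ring
  rw [hre, mu_apply, coeff_C_mul, coeff_C_mul, ← mul_assoc, pp_zero, zero_mul, zero_add,
    coeff_mul_X', if_neg (not_mem_m2_supp), mul_zero]

lemma mu_mul_F1 (c : MvPolynomial (Fin 2) (ZMod (p ^ 2))) :
    μl p (c * (X 0 ^ p - (p : MvPolynomial (Fin 2) (ZMod (p ^ 2))) * X 1)) = 0 := by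
  rw [mul_sub, map_sub]
  have h1 : μl p (c * X 0 ^ p) = (p : ZMod (p ^ 2)) * coeff 0 c := by
    rw [mu_apply, X_pow_eq_monomial,
      show (Finsupp.single (0 : Fin 2) p) = m1 p from rfl,
      coeff_mul_monomial', coeff_mul_monomial']
    rw [if_pos (le_refl (m1 p)), if_neg (not_le_m1_m2 p)]
    simp
  have h2 : μl p (c * ((p : MvPolynomial (Fin 2) (ZMod (p ^ 2))) * X 1)) =
      (p : ZMod (p ^ 2)) * coeff 0 c := by
    have hre : c * ((p : MvPolynomial (Fin 2) (ZMod (p ^ 2))) * X 1) =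
        C (p : ZMod (p ^ 2)) * (c * X 1) := by
      rw [← map_natCast (C : ZMod (p ^ 2) →+* MvPolynomial (Fin 2) (ZMod (p ^ 2)))]
      ring
    rw [hre, mu_apply, coeff_C_mul, coeff_C_mul, ← mul_assoc, pp_zero, zero_mul, zero_add,
      coeff_mul_X', if_pos (mem_m2_supp)]
    congr 1
    simp [m2]
  rw [h1, h2, sub_self]

lemma mu_mul_yp (c : MvPolynomial (Fin 2) (ZMod (p ^ 2))) :
    μl p (c * X 1 ^ p) = 0 := by
  have h2 := hp.out.two_le
  rw [mu_apply, X_pow_eq_monomial, coeff_mul_monomial', coeff_mul_monomial']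
  rw [if_neg ?_, if_neg ?_]
  · ring
  · intro h
    have h1 := h 1
    simp [m1, m2, Finsupp.single_apply] at h1
    omega
  · intro h
    have h1 := h 1
    simp [m1, m2, Finsupp.single_apply] at h1
    omega

/-- the base case: `x^p ∉ J₁ + (p²)` -/
theorem base_case :
    (X 0 : Rpoly p) ^ (Nn p 1) ∉ JJ p 1 ⊔ Ideal.span {(p : Rpoly p) ^ (1 + 1)} := by
  intro hmem
  rw [Nn_one] at hmem
  obtain ⟨u, hu, v, hv, huv⟩ := Submodule.mem_sup.mp hmem
  -- image of u under Φ₂ killed by μl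
  have hmapu : ∀ w ∈ JJ p 1, ∀ c, μl p (c * Φ₂ p w) = 0 := by
    intro w hw
    refine Submodule.span_induction ?_ ?_ ?_ ?_ hw
    · rintro z (⟨n, rfl⟩ | rfl) c
      · fin_cases n
        · -- n = 0 : p^1 * x
          have himg : Φ₂ p ((p : Rpoly p) ^ (1 - 0) * Fxy p 0) =
              (p : MvPolynomial (Fin 2) (ZMod (p ^ 2))) * X 0 := by
            rw [Fxy_zero]
            simp [Φ₂]
          rw [himg]
          exact mu_mul_px p c
        · -- n = 1 : F₁
          have himg : Φ₂ p ((p : Rpoly p) ^ (1 - 1) * Fxy p 1) =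
              X 0 ^ p - (p : MvPolynomial (Fin 2) (ZMod (p ^ 2))) * X 1 := by
            rw [Fxy_one]
            simp [Φ₂]
          rw [himg]
          exact mu_mul_F1 p c
      · have himg : Φ₂ p ((X 1 : Rpoly p) ^ p ^ 1) =
            (X 1 : MvPolynomial (Fin 2) (ZMod (p ^ 2))) ^ p := by
          simp [Φ₂]
        rw [himg]
        exact mu_mul_yp p c
    · intro c; rw [map_zero, mul_zero, map_zero]
    · intro z w _ _ hz hw c
      rw [map_add, mul_add, map_add, hz, hw, add_zero]
    · intro a z _ hz c
      rw [smul_eq_mul, map_mul (Φ₂ p), ← mul_assoc]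
      exact hz (c * Φ₂ p a)
  -- image of v is zero
  have hmapv : Φ₂ p v = 0 := by
    obtain ⟨a, ha⟩ := Ideal.mem_span_singleton'.mp hv
    have hz : ((p : MvPolynomial (Fin 2) (ZMod (p ^ 2)))) ^ (1 + 1) = 0 := by
      rw [← Nat.cast_pow,
        ← map_natCast (C : ZMod (p ^ 2) →+* MvPolynomial (Fin 2) (ZMod (p ^ 2))),
        ZMod.natCast_self, map_zero]
    rw [← ha, map_mul, map_pow, map_natCast, hz, mul_zero]
  -- evaluate
  have heq : μl p (Φ₂ p u) + μl p (Φ₂ p v) = μl p (Φ₂ p ((X 0 : Rpoly p) ^ p)) := by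
    rw [← map_add, ← map_add, huv]
  rw [hmapv, map_zero, add_zero] at heq
  have hu0 : μl p (Φ₂ p u) = 0 := by
    have := hmapu u hu 1
    rwa [one_mul] at this
  rw [hu0] at heq
  -- but μl(x^p) = p ≠ 0
  have hxp : μl p (Φ₂ p ((X 0 : Rpoly p) ^ p)) = (p : ZMod (p ^ 2)) := by
    have himg : Φ₂ p ((X 0 : Rpoly p) ^ p) = (X 0 : MvPolynomial (Fin 2) (ZMod (p ^ 2))) ^ p := by
      simp [Φ₂]
    rw [himg, mu_apply, X_pow_eq_monomial,
      show (Finsupp.single (0 : Fin 2) p) = m1 p from rfl]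
    have hc1 : coeff (m1 p) ((monomial (m1 p)) (1 : ZMod (p ^ 2))) = 1 := by
      rw [coeff_monomial, if_pos rfl]
    have hc2 : coeff m2 ((monomial (m1 p)) (1 : ZMod (p ^ 2))) = 0 := by
      rw [coeff_monomial, if_neg ?_]
      intro h
      have h0 := DFunLike.congr_fun h 0
      simp [m1, m2, Finsupp.single_apply] at h0
      have := hp.out.pos
      omega
    rw [hc1, hc2, mul_one, add_zero]
  rw [← heq] at hxp
  have hpne : (p : ZMod (p ^ 2)) ≠ 0 := by
    intro h0
    have := (ZMod.natCast_eq_zero_iff p (p ^ 2)).mp h0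
    have h2 := hp.out.two_le
    have : p ^ 2 ≤ p := Nat.le_of_dvd hp.out.pos this
    nlinarith
  exact hpne hxp.symm

end Base

end Xpow
namespace Xpow

variable (p : ℕ) [hp : Fact p.Prime]

lemma Nn_step2 (m : ℕ) : Nn p m + 2 ≤ Nn p (m + 1) := by
  have h2 := hp.out.two_le
  cases m with
  | zero =>
    simp only [Nn, zero_add, pow_one, pow_zero]
    omega
  | succ m =>
    simp only [Nn, show m + 1 + 1 = m + 2 from rfl]
    have h6 : 1 ≤ p ^ m := Nat.one_le_pow _ _ hp.out.pos
    have hh : p ^ m + 3 ≤ p ^ (m + 2) := by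
      have h3 : p ^ (m + 2) = p ^ m * p ^ 2 := by ring
      have h4 : 4 ≤ p ^ 2 := by nlinarith
      nlinarith
    have h1 : 1 ≤ p ^ (m + 1) := Nat.one_le_pow _ _ hp.out.pos
    omega

lemma Nn_grow2 (a b : ℕ) : Nn p a + 2 * b ≤ Nn p (a + b) := by
  induction b with
  | zero => simp
  | succ b ih =>
    rw [show a + (b + 1) = (a + b) + 1 from by omega]
    have := Nn_step2 p (a + b)
    omega

theorem main_nonmem (e : ℕ) (he : 1 ≤ e) :
    (X 0 : Rpoly p) ^ (Nn p e) ∉ JJ p e ⊔ Ideal.span {(p : Rpoly p) ^ (e + 1)} := by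
  induction e, he using Nat.le_induction with
  | base => exact base_case p
  | succ e he ih =>
    intro hmem
    set I' : Ideal (Rpoly p) := JJ p e ⊔ Ideal.span {(p : Rpoly p) ^ (e + 1)} with hI'
    -- Step 1: Λ of the big power is in I'
    have hL : Λf p (X 0 ^ (Nn p (e + 1))) ∈ I' := by
      obtain ⟨u, hu, v, hv, huv⟩ := Submodule.mem_sup.mp hmem
      have hv' : Λf p v ∈ I' := by
        obtain ⟨a, ha⟩ := Ideal.mem_span_singleton'.mp hv
        have hva : v = (p : Rpoly p) ^ (e + 1 + 1) * a := by rw [← ha]; ring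
        rw [hva, Lambda_pmul]
        refine Submodule.mem_sup_right (Ideal.mem_span_singleton.mpr ?_)
        exact Dvd.dvd.mul_right (pow_dvd_pow _ (by omega)) _
      have hu' : ∀ c, Λf p (c * u) ∈ I' := by
        refine Submodule.span_induction ?_ ?_ ?_ ?_ hu
        · rintro z (⟨n, rfl⟩ | rfl) c
          · beta_reduce
            rcases Fin.eq_zero_or_eq_succ n with hn0 | ⟨m, hm⟩
            · subst hn0
              have hz : ((p : Rpoly p) ^ (e + 1 - (0:ℕ)) * Fxy p 0) = (p:Rpoly p)^(e+1) * X 0 := by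
                rw [Fxy_zero, Nat.sub_zero]
              simp only [Fin.val_zero] at *
              rw [hz, show c * ((p:Rpoly p)^(e+1) * X 0) = (p:Rpoly p)^(e+1) * (c * X 0) from by ring,
                Lambda_pmul]
              exact Submodule.mem_sup_right (Ideal.mem_span_singleton.mpr (Dvd.dvd.mul_right dvd_rfl _))
            · subst hm
              have hval : ((m.succ : Fin (e + 2)) : ℕ) = (m : ℕ) + 1 := by
                simp [Fin.val_succ]
              have hz : ((p : Rpoly p) ^ (e + 1 - ((m.succ : Fin (e+2)) : ℕ)) * Fxy p ((m.succ : Fin (e+2)) : ℕ)) =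
                  σh p ((p : Rpoly p) ^ (e - (m : ℕ)) * Fxy p (m : ℕ)) := by
                rw [map_mul, map_pow, map_natCast, sigma_Fxy, hval,
                  show e + 1 - ((m : ℕ) + 1) = e - (m : ℕ) from by omega]
              rw [hz, mul_comm, Lambda_sigma_mul]
              refine Submodule.mem_sup_left (Ideal.mul_mem_right _ _ ?_)
              exact gen_mem p e (m : ℕ) (by have := m.isLt; omega)
          · have hz : (X 1 : Rpoly p) ^ p ^ (e + 1) = σh p ((X 1 : Rpoly p) ^ p ^ e) := by
              rw [map_pow, sigma_X1, ← pow_mul, ← pow_succ']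
            rw [hz, mul_comm, Lambda_sigma_mul]
            exact Submodule.mem_sup_left (Ideal.mul_mem_right _ _ (ypow_mem p e))
        · intro c
          rw [mul_zero, map_zero]
          exact Submodule.zero_mem _
        · intro z w _ _ hz hw c
          rw [mul_add, map_add]
          exact Submodule.add_mem _ (hz c) (hw c)
        · intro a z _ hz c
          rw [smul_eq_mul, show c * (a * z) = (c * a) * z from by ring]
          exact hz (c * a)
      have huv' : Λf p (X 0 ^ (Nn p (e + 1))) = Λf p u + Λf p v := by
        rw [← map_add, huv]
      rw [huv']
      refine Submodule.add_mem _ ?_ hv'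
      have := hu' 1
      rwa [one_mul] at this
    -- Step 2: expand Λ
    have hexp : Nn p (e + 1) = p * Nn p e + (p - 1) := by
      have h := Nn_mul p (e + 1) (by omega)
      rw [show e + 1 - 1 = e from by omega] at h
      have h2 : p * (Nn p e + 1) = p * Nn p e + p := by ring
      have := hp.out.pos
      omega
    rw [hexp, Lambda_xpow p (Nn p e), Finset.sum_range_succ] at hL
    have hlast : (if (Nn p e - Nn p e) % p = 0 then
        (((Nn p e).choose (Nn p e) : Rpoly p) * (p : Rpoly p) ^ (Nn p e - Nn p e) *
          X 0 ^ (Nn p e) * X 1 ^ ((Nn p e - Nn p e) / p))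
       else 0) = X 0 ^ (Nn p e) := by
      rw [Nat.sub_self]
      simp [Nat.choose_self]
    rw [hlast] at hL
    -- Step 3: all summands with k < Nn p e are in I'
    have hsum : (∑ k ∈ Finset.range (Nn p e),
        (if (Nn p e - k) % p = 0 then
          (((Nn p e).choose k : Rpoly p) * (p : Rpoly p) ^ (Nn p e - k) *
            X 0 ^ k * X 1 ^ ((Nn p e - k) / p))
         else 0)) ∈ I' := by
      refine Ideal.sum_mem _ ?_
      intro k hk
      rw [Finset.mem_range] at hk
      by_cases hmod : (Nn p e - k) % p = 0
      · rw [if_pos hmod]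
        by_cases hd : e + 1 ≤ Nn p e - k
        · -- coefficient is divisible by p^(e+1)
          refine Submodule.mem_sup_right (Ideal.mem_span_singleton.mpr ?_)
          have hsplitp : (p : Rpoly p) ^ (Nn p e - k) =
              (p : Rpoly p) ^ (e + 1) * (p : Rpoly p) ^ (Nn p e - k - (e + 1)) := by
            rw [← pow_add]
            congr 1
            omega
          exact ⟨((Nn p e).choose k : Rpoly p) * (p : Rpoly p) ^ (Nn p e - k - (e + 1)) *
            X 0 ^ k * X 1 ^ ((Nn p e - k) / p), by rw [hsplitp]; ring⟩
        · -- use the membership lemma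
          have hd1 : 1 ≤ Nn p e - k := by omega
          have hd2 : Nn p e - k ≤ e := by omega
          have hmm := Mlem p e he (Nn p e - k) hd2
          have hkge : Nn p (e - (Nn p e - k)) + 1 ≤ k := by
            have hgrow := Nn_grow2 p (e - (Nn p e - k)) (Nn p e - k)
            rw [show e - (Nn p e - k) + (Nn p e - k) = e from by omega] at hgrow
            omega
          obtain ⟨d, hd'⟩ : ∃ d, Nn p e - k = d := ⟨_, rfl⟩
          rw [hd'] at hmm hkge ⊢
          obtain ⟨c', hc'⟩ : ∃ c', Nn p (e - d) + 1 = c' := ⟨_, rfl⟩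
          rw [hc'] at hmm hkge
          obtain ⟨s, hs⟩ : ∃ s, k = c' + s := ⟨k - c', by omega⟩
          refine Submodule.mem_sup_left ?_
          have hkey : ((Nn p e).choose k : Rpoly p) * (p : Rpoly p) ^ d *
              X 0 ^ k * X 1 ^ (d / p) =
              (((Nn p e).choose k : Rpoly p) * X 0 ^ s * X 1 ^ (d / p)) *
                ((p : Rpoly p) ^ d * X 0 ^ c') := by
            rw [show (X 0 : Rpoly p) ^ k = X 0 ^ c' * X 0 ^ s from by rw [← pow_add, ← hs]]
            ring
          rw [hkey]
          exact Ideal.mul_mem_left _ _ hmm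
      · rw [if_neg hmod]
        exact Submodule.zero_mem _
    -- Step 4: contradiction with the inductive hypothesis
    apply ih
    have := Submodule.sub_mem _ hL hsum
    simpa using this

end Xpow

/-- With `J ⊆ R` the ideal generated by the `p^{e-n}·F_n(x,y)` for `0 ≤ n ≤ e`
together with `y^{p^e}`, one has `x^{p^e+p^{e-1}-1} ∉ J`; consequently in `A = R/J`
the class `a` of `x` satisfies `p^e·a = 0` but `a^{p^e+p^{e-1}-1} ≠ 0`. -/
theorem x_pow_not_mem_J (p : ℕ) [hp : Fact p.Prime] (e : ℕ) (he : 1 ≤ e)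
    (J : Ideal (Rpoly p))
    (hJ : J = Ideal.span
      ((Set.range fun n : Fin (e + 1) => (p : Rpoly p) ^ (e - (n : ℕ)) * Fxy p n) ∪
        {X 1 ^ p ^ e})) :
    (X 0 : Rpoly p) ^ (p ^ e + p ^ (e - 1) - 1) ∉ J ∧
    (p : Rpoly p ⧸ J) ^ e * Ideal.Quotient.mk J (X 0) = 0 ∧
    (Ideal.Quotient.mk J (X 0 : Rpoly p)) ^ (p ^ e + p ^ (e - 1) - 1) ≠ 0 := by
  have hJJ : J = Xpow.JJ p e := hJ.trans rfl
  have hNn : p ^ e + p ^ (e - 1) - 1 = Xpow.Nn p e := by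
    obtain ⟨m, rfl⟩ : ∃ m, e = m + 1 := ⟨e - 1, by omega⟩
    simp [Xpow.Nn]
  have h1 : (X 0 : Rpoly p) ^ (p ^ e + p ^ (e - 1) - 1) ∉ J := by
    rw [hNn, hJJ]
    intro hmem
    exact Xpow.main_nonmem p e he (Submodule.mem_sup_left hmem)
  refine ⟨h1, ?_, ?_⟩
  · have hmem : (p : Rpoly p) ^ e * X 0 ∈ J := by
      rw [hJJ]
      have h := Xpow.gen_mem p e 0 (by omega)
      rwa [Xpow.Fxy_zero, Nat.sub_zero] at h
    calc (p : Rpoly p ⧸ J) ^ e * Ideal.Quotient.mk J (X 0)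
        = Ideal.Quotient.mk J ((p : Rpoly p) ^ e * X 0) := by
          rw [map_mul, map_pow, map_natCast]
      _ = 0 := Ideal.Quotient.eq_zero_iff_mem.mpr hmem
  · intro h0
    rw [← map_pow, Ideal.Quotient.eq_zero_iff_mem] at h0
    exact h1 h0
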